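/- Let n be a natural number divisible by 8, and let Δ, γ be natural numbers with Δ + γ ≤ n/40. Then C(n/4, n/8 − Δ) ≤ (1 + 10·(2Δ + γ)/n)^γ · C(n/4, n/8 − Δ − γ), where C(·,·) denotes the binomial coefficient and the inequality is between real numbers. -/

import Mathlib

open Finset

private lemma pow_aux (p v : ℝ) (hp : 0 ≤ p) (hv : 0 ≤ v) (k : ℕ) :
    (p + (k + 1) * v) * p ^ k ≤ (p + v) ^ (k + 1) := by
  induction k with
  | zero => simp
  | succ k ih =>
    have h1 : (0:ℝ) ≤ p ^ k := pow_nonneg hp k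
    have key : (p + ((k:ℝ) + 1 + 1) * v) * p ≤ (p + v) * (p + ((k:ℝ) + 1) * v) := by
      nlinarith [mul_nonneg (mul_nonneg (Nat.cast_nonneg (α := ℝ) k) hv) hv,
        mul_nonneg hv hv]
    push_cast
    calc (p + ((k:ℝ) + 1 + 1) * v) * p ^ (k + 1)
        = ((p + ((k:ℝ) + 1 + 1) * v) * p) * p ^ k := by ring
      _ ≤ ((p + v) * (p + ((k:ℝ) + 1) * v)) * p ^ k := mul_le_mul_of_nonneg_right key h1
      _ = (p + v) * ((p + ((k:ℝ) + 1) * v) * p ^ k) := by ring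
      _ ≤ (p + v) * (p + v) ^ (k + 1) := mul_le_mul_of_nonneg_left ih (by linarith)
      _ = (p + v) ^ (k + 1 + 1) := by ring

private lemma prod_aux (u D : ℝ) (hu : 0 ≤ u) (hD : 0 ≤ D) (k : ℕ) :
    ∏ j ∈ range k, (1 + u * (D + 2 * j + 1)) ≤ (1 + u * (D + k)) ^ k := by
  induction k with
  | zero => simp
  | succ k ih =>
    have hfac : (0:ℝ) ≤ 1 + u * (D + 2 * k + 1) := by positivity
    have hp : (0:ℝ) ≤ 1 + u * (D + k) := by positivity
    rw [prod_range_succ]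
    calc (∏ j ∈ range k, (1 + u * (D + 2 * j + 1))) * (1 + u * (D + 2 * k + 1))
        ≤ (1 + u * (D + k)) ^ k * (1 + u * (D + 2 * k + 1)) := by
          apply mul_le_mul_of_nonneg_right ih hfac
      _ = ((1 + u * (D + k)) + ((k:ℝ) + 1) * u) * (1 + u * (D + k)) ^ k := by ring
      _ ≤ ((1 + u * (D + k)) + u) ^ (k + 1) := pow_aux _ u hp hu k
      _ = (1 + u * (D + (k:ℝ) + 1)) ^ (k + 1) := by ring_nf
      _ = (1 + u * (D + ((k:ℕ)+1 : ℕ))) ^ (k + 1) := by push_cast; ring_nf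

private lemma step_aux (N Δ k : ℕ) (h : 5 * (Δ + k + 1) ≤ N) :
    (Nat.choose (2 * N) (N - Δ - k) : ℝ) ≤
      (1 + 10 * (2 * (Δ:ℝ) + 2 * k + 1) / (8 * N : ℝ)) *
        (Nat.choose (2 * N) (N - Δ - k - 1) : ℝ) := by
  have ha1 : 1 ≤ N - Δ - k := by omega
  have hid := Nat.choose_succ_right_eq (2 * N) (N - Δ - k - 1)
  have he1 : N - Δ - k - 1 + 1 = N - Δ - k := by omega
  have he2 : 2 * N - (N - Δ - k - 1) = N + Δ + k + 1 := by omega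
  rw [he1, he2] at hid
  have hidR : (Nat.choose (2 * N) (N - Δ - k) : ℝ) * ((N:ℝ) - Δ - k) =
      (Nat.choose (2 * N) (N - Δ - k - 1) : ℝ) * ((N:ℝ) + Δ + k + 1) := by
    have := congrArg (Nat.cast (R := ℝ)) hid
    push_cast at this
    have hc : ((N - Δ - k : ℕ) : ℝ) = (N:ℝ) - Δ - k := by
      rw [Nat.cast_sub (show k ≤ N - Δ by omega), Nat.cast_sub (show Δ ≤ N by omega)]
    rw [hc] at this
    linarith [this]
  have hNpos : 0 < (N:ℝ) := by
    have : 0 < N := by omega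
    exact_mod_cast this
  have hapos : (0:ℝ) < (N:ℝ) - Δ - k := by
    have h5 : 5 * ((Δ:ℝ) + k + 1) ≤ N := by exact_mod_cast h
    linarith
  have hC' : (0:ℝ) ≤ (Nat.choose (2 * N) (N - Δ - k - 1) : ℝ) := Nat.cast_nonneg _
  rw [← mul_le_mul_iff_of_pos_right hapos]
  rw [hidR]
  have h5 : 5 * ((Δ:ℝ) + k + 1) ≤ N := by exact_mod_cast h
  have key : (N:ℝ) + Δ + k + 1 ≤
      (1 + 10 * (2 * (Δ:ℝ) + 2 * k + 1) / (8 * N)) * ((N:ℝ) - Δ - k) := by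
    rw [← sub_nonneg]
    have expand : (1 + 10 * (2 * (Δ:ℝ) + 2 * k + 1) / (8 * N)) * ((N:ℝ) - Δ - k) -
        ((N:ℝ) + Δ + k + 1) =
        (10 * (2 * (Δ:ℝ) + 2 * k + 1) * ((N:ℝ) - Δ - k) - (2*Δ + 2*k+1) * (8*N)) / (8 * N) := by
      field_simp
      ring
    rw [expand]
    apply div_nonneg _ (by positivity)
    nlinarith [h5, Nat.cast_nonneg (α := ℝ) Δ, Nat.cast_nonneg (α := ℝ) k]
  calc (Nat.choose (2 * N) (N - Δ - k - 1) : ℝ) * ((N:ℝ) + Δ + k + 1)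
      ≤ (Nat.choose (2 * N) (N - Δ - k - 1) : ℝ) *
        ((1 + 10 * (2 * (Δ:ℝ) + 2 * k + 1) / (8 * N)) * ((N:ℝ) - Δ - k)) := by
        apply mul_le_mul_of_nonneg_left key hC'
    _ = (1 + 10 * (2 * (Δ:ℝ) + 2 * k + 1) / (8 * N)) *
        (Nat.choose (2 * N) (N - Δ - k - 1) : ℝ) * ((N:ℝ) - Δ - k) := by ring

/-- For `n` divisible by `8` and `Δ + γ ≤ n/40`,
`C(n/4, n/8 − Δ) ≤ (1 + 10(2Δ+γ)/n)^γ · C(n/4, n/8 − Δ − γ)`. -/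
theorem binom_ratio_bound (n Δ γ : ℕ) (h8 : 8 ∣ n) (h : Δ + γ ≤ n / 40) :
    (Nat.choose (n / 4) (n / 8 - Δ) : ℝ) ≤
      (1 + 10 * (2 * Δ + γ) / (n : ℝ)) ^ γ * (Nat.choose (n / 4) (n / 8 - Δ - γ) : ℝ) := by
  obtain ⟨N, rfl⟩ := h8
  have h4 : 8 * N / 4 = 2 * N := by omega
  have h8' : 8 * N / 8 = N := by omega
  rw [h4, h8']
  have hN : 5 * (Δ + γ) ≤ N := by omega
  have chain : ∀ g, 5 * (Δ + g) ≤ N →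
      (Nat.choose (2 * N) (N - Δ) : ℝ) ≤
        (∏ j ∈ range g, (1 + 10 * (2 * (Δ:ℝ) + 2 * j + 1) / (8 * N : ℝ))) *
          (Nat.choose (2 * N) (N - Δ - g) : ℝ) := by
    intro g
    induction g with
    | zero => intro _; simp
    | succ g ih =>
      intro hg
      have ihg := ih (by omega)
      have hstep := step_aux N Δ g (by omega)
      have hsub : N - Δ - (g + 1) = N - Δ - g - 1 := by omega
      rw [prod_range_succ, hsub]
      have hprodnn : (0:ℝ) ≤ ∏ j ∈ range g, (1 + 10 * (2 * (Δ:ℝ) + 2 * j + 1) / (8 * N : ℝ)) := by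
        apply Finset.prod_nonneg
        intro j _
        positivity
      calc (Nat.choose (2 * N) (N - Δ) : ℝ)
          ≤ (∏ j ∈ range g, (1 + 10 * (2 * (Δ:ℝ) + 2 * j + 1) / (8 * N : ℝ))) *
            (Nat.choose (2 * N) (N - Δ - g) : ℝ) := ihg
        _ ≤ (∏ j ∈ range g, (1 + 10 * (2 * (Δ:ℝ) + 2 * j + 1) / (8 * N : ℝ))) *
            ((1 + 10 * (2 * (Δ:ℝ) + 2 * g + 1) / (8 * N : ℝ)) *
              (Nat.choose (2 * N) (N - Δ - g - 1) : ℝ)) := by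
            apply mul_le_mul_of_nonneg_left hstep hprodnn
        _ = (∏ j ∈ range g, (1 + 10 * (2 * (Δ:ℝ) + 2 * j + 1) / (8 * N : ℝ))) *
            (1 + 10 * (2 * (Δ:ℝ) + 2 * g + 1) / (8 * N : ℝ)) *
            (Nat.choose (2 * N) (N - Δ - g - 1) : ℝ) := by ring
  have hchain := chain γ hN
  have hu : (0:ℝ) ≤ 10 / (8 * N : ℝ) := by positivity
  have hD : (0:ℝ) ≤ 2 * (Δ:ℝ) := by positivity
  have hAM := prod_aux (10 / (8 * N : ℝ)) (2 * (Δ:ℝ)) hu hD γ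
  have heq : ∀ j : ℕ, (1 + 10 / (8 * N : ℝ) * (2 * (Δ:ℝ) + 2 * j + 1)) =
      (1 + 10 * (2 * (Δ:ℝ) + 2 * j + 1) / (8 * N : ℝ)) := by
    intro j; ring
  simp only [heq] at hAM
  have hCnn : (0:ℝ) ≤ (Nat.choose (2 * N) (N - Δ - γ) : ℝ) := Nat.cast_nonneg _
  refine hchain.trans ?_
  refine mul_le_mul_of_nonneg_right (hAM.trans_eq ?_) hCnn
  push_cast
  ring
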